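/- Let $L = (L_1, \ldots, L_h)$ be a linear extension of a finite subset $X \subseteq \binom{[n]}{k}$ with the Gale order, and suppose the Hasse diagram of $L$ (edges $\{i,j\}$ with $L_i \lessdot L_j$ a covering relation in $X$) is a subgraph of the dual graph of $L$ (edges $\{i,j\}$ with $|L_i \cap L_j| = k-1$). Then the tracks of the two graphs coincide: $T_{D(L)} = T_{H(L)}$, and consequently $\partial_D L = \partial_H L$. -/

import Mathlib

/-- Increasing enumeration of a finite set of naturals. -/
def sortedL (x : Finset ℕ) : List ℕ := x.sort (· ≤ ·)

/-- The Gale (Bruhat) order on finite subsets of ℕ: componentwise comparison of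
the increasing enumerations. -/
def GaleLE (x y : Finset ℕ) : Prop :=
  ∀ i (hx : i < (sortedL x).length) (hy : i < (sortedL y).length),
    (sortedL x).get ⟨i, hx⟩ ≤ (sortedL y).get ⟨i, hy⟩

def GaleLT (x y : Finset ℕ) : Prop := GaleLE x y ∧ x ≠ y
/-- The track of a graph `E` on vertex set `[h]` (1-based): `1` is in the track,
and from a track element `v` the next track element is the least `j ∈ [h]` with
`j > v` and `{v, j}` an edge. -/
inductive InTrack (E : ℕ → ℕ → Prop) (h : ℕ) : ℕ → Prop where
  | base : 1 ≤ h → InTrack E h 1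
  | step (v j : ℕ) : InTrack E h v → v < j → j ≤ h → E v j →
      (∀ m, v < m → m < j → ¬ E v m) → InTrack E h j

open scoped Classical in
/-- The promotion permutation `∂_G` of a graph `G = ([h], E)`:
`i ↦ i - 1` for `i` not in the track, each track element is sent to
(next track element) − 1, and the last track element is sent to `h`. -/
noncomputable def promoPerm (E : ℕ → ℕ → Prop) (h : ℕ) (i : ℕ) : ℕ :=
  if InTrack E h i then
    if {j | InTrack E h j ∧ i < j}.Nonempty then sInf {j | InTrack E h j ∧ i < j} - 1
    else h
  else i - 1

/-- The dual graph of the sequence `C` of `k`-subsets: `{i, j}` is an edge iff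
`|C i ∩ C j| = k - 1`. -/
def dualE (k : ℕ) (C : ℕ → Finset ℕ) (i j : ℕ) : Prop :=
  i ≠ j ∧ (C i ∩ C j).card = k - 1

/-- The Hasse graph of the labeled sequence `L` with respect to the collection
`X`: `{i, j}` is an edge iff `L i` and `L j` form a covering relation in the
Gale order of `X`. -/
def hasseE (X : Set (Finset ℕ)) (L : ℕ → Finset ℕ) (i j : ℕ) : Prop :=
  (GaleLT (L i) (L j) ∧ ∀ z ∈ X, ¬(GaleLT (L i) z ∧ GaleLT z (L j))) ∨
  (GaleLT (L j) (L i) ∧ ∀ z ∈ X, ¬(GaleLT (L j) z ∧ GaleLT z (L i)))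

section Aux

open List

private lemma claimB : ∀ (l : List ℕ) (c b : ℕ), l.Pairwise (· ≤ ·) → c ≤ b →
    (∀ x ∈ l, c ≤ x) →
    List.Forall₂ (· ≤ ·) (c :: l) (List.orderedInsert (· ≤ ·) b l)
  | [], c, b, _, hcb, _ => by
    simpa [List.orderedInsert] using List.Forall₂.cons hcb List.Forall₂.nil
  | d :: t, c, b, hs, hcb, hall => by
    rcases List.pairwise_cons.mp hs with ⟨hd, ht⟩
    by_cases hbd : b ≤ d
    · rw [List.orderedInsert_cons_of_le _ _ hbd]
      exact List.Forall₂.cons hcb (List.forall₂_refl _)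
    · have hrw : List.orderedInsert (· ≤ ·) b (d :: t)
          = d :: List.orderedInsert (· ≤ ·) b t := by
        simp [List.orderedInsert, hbd]
      rw [hrw]
      exact List.Forall₂.cons (hall d (by simp))
        (claimB t d b ht (le_of_not_ge hbd) hd)

private lemma claimA : ∀ (l : List ℕ) (a b : ℕ), l.Pairwise (· ≤ ·) → a ≤ b →
    List.Forall₂ (· ≤ ·)
      (List.orderedInsert (· ≤ ·) a l) (List.orderedInsert (· ≤ ·) b l)
  | [], a, b, _, hab => by
    simpa [List.orderedInsert] using List.Forall₂.cons hab List.Forall₂.nil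
  | c :: t, a, b, hs, hab => by
    rcases List.pairwise_cons.mp hs with ⟨hc, ht⟩
    by_cases hac : a ≤ c
    · rw [List.orderedInsert_cons_of_le _ _ hac]
      by_cases hbc : b ≤ c
      · rw [List.orderedInsert_cons_of_le _ _ hbc]
        exact List.Forall₂.cons hab (List.forall₂_refl _)
      · have hrw : List.orderedInsert (· ≤ ·) b (c :: t)
            = c :: List.orderedInsert (· ≤ ·) b t := by
          simp [List.orderedInsert, hbc]
        rw [hrw]
        exact List.Forall₂.cons hac (claimB t c b ht (le_of_not_ge hbc) hc)
    · have hbc : ¬ b ≤ c := fun hbc => hac (hab.trans hbc)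
      have hrwa : List.orderedInsert (· ≤ ·) a (c :: t)
          = c :: List.orderedInsert (· ≤ ·) a t := by
        simp [List.orderedInsert, hac]
      have hrwb : List.orderedInsert (· ≤ ·) b (c :: t)
          = c :: List.orderedInsert (· ≤ ·) b t := by
        simp [List.orderedInsert, hbc]
      rw [hrwa, hrwb]
      exact List.Forall₂.cons le_rfl (claimA t a b ht hab)

private lemma sortedL_insert (a : ℕ) (s : Finset ℕ) (ha : a ∉ s) :
    sortedL (insert a s) = List.orderedInsert (· ≤ ·) a (sortedL s) := by
  refine (fun hp h1 h2 => List.Perm.eq_of_pairwise' (r := fun a b : ℕ => a ≤ b) h1 h2 hp) ?_ ?_ ?_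
  · have h1 : (sortedL (insert a s) : Multiset ℕ) = (insert a s).val :=
      Finset.sort_eq _ _
    have h2 : (insert a s).val = a ::ₘ s.val := Finset.insert_val_of_notMem ha
    have h3 : (sortedL s : Multiset ℕ) = s.val := Finset.sort_eq _ _
    have hperm : sortedL (insert a s) ~ a :: sortedL s := by
      rw [← Multiset.coe_eq_coe, h1, ← Multiset.cons_coe, h3, h2]
    exact hperm.trans (List.perm_orderedInsert _ _ _).symm
  · exact Finset.pairwise_sort _ _
  · exact List.Pairwise.orderedInsert a _ (Finset.pairwise_sort _ _)

private lemma galeLE_insert (s : Finset ℕ) (a b : ℕ) (ha : a ∉ s) (hb : b ∉ s)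
    (hab : a ≤ b) : GaleLE (insert a s) (insert b s) := by
  have key := claimA (sortedL s) a b (Finset.pairwise_sort _ _) hab
  rw [← sortedL_insert a s ha, ← sortedL_insert b s hb] at key
  intro i hx hy
  exact (List.forall₂_iff_get.mp key).2 i hx hy

private lemma gale_comparable (k : ℕ) (x y : Finset ℕ) (hx : x.card = k)
    (hy : y.card = k) (hne : x ≠ y) (hcap : (x ∩ y).card = k - 1) :
    GaleLT x y ∨ GaleLT y x := by
  have hk : 1 ≤ k := by
    by_contra hk
    have : k = 0 := by omega
    subst this
    rw [Finset.card_eq_zero] at hx hy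
    exact hne (hx.trans hy.symm)
  have hxd : (x \ y).card = 1 := by
    have := Finset.card_inter_add_card_sdiff x y
    omega
  have hyd : (y \ x).card = 1 := by
    have := Finset.card_inter_add_card_sdiff y x
    rw [Finset.inter_comm] at hcap
    omega
  obtain ⟨a, hA⟩ := Finset.card_eq_one.mp hxd
  obtain ⟨b, hB⟩ := Finset.card_eq_one.mp hyd
  have hax : a ∈ x \ y := hA ▸ Finset.mem_singleton_self a
  have hbx : b ∈ y \ x := hB ▸ Finset.mem_singleton_self b
  have hxe : x = insert a (x ∩ y) := by
    rw [Finset.insert_eq, ← hA, Finset.sdiff_union_inter]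
  have hye : y = insert b (x ∩ y) := by
    rw [Finset.insert_eq, ← hB, Finset.inter_comm, Finset.sdiff_union_inter]
  have hanin : a ∉ x ∩ y := fun hmem =>
    (Finset.mem_sdiff.mp hax).2 (Finset.mem_inter.mp hmem).2
  have hbnin : b ∉ x ∩ y := fun hmem =>
    (Finset.mem_sdiff.mp hbx).2 (Finset.mem_inter.mp hmem).1
  rcases le_total a b with hab | hab
  · left
    refine ⟨?_, hne⟩
    have hg := galeLE_insert _ a b hanin hbnin hab
    rwa [← hxe, ← hye] at hg
  · right
    refine ⟨?_, hne.symm⟩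
    have hg := galeLE_insert _ b a hbnin hanin hab
    rwa [← hye, ← hxe] at hg

end Aux

/-- If the Hasse diagram of a linear extension `L` is a subgraph of its dual
graph, then the two tracks coincide and consequently `∂_D L = ∂_H L`
(the two promotion permutations coincide). -/
theorem promo_dual_eq_promo_hasse
    (n k h : ℕ) (X : Set (Finset ℕ))
    (hX : ∀ x ∈ X, x ⊆ Finset.Icc 1 n ∧ x.card = k)
    (L : ℕ → Finset ℕ)
    (hmem : ∀ x, x ∈ X ↔ ∃ m, 1 ≤ m ∧ m ≤ h ∧ L m = x)
    (hinj : ∀ i j, 1 ≤ i → i < j → j ≤ h → L i ≠ L j)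
    (hlin : ∀ i j, 1 ≤ i → i ≤ h → 1 ≤ j → j ≤ h → GaleLT (L i) (L j) → i < j)
    (hsub : ∀ i j, 1 ≤ i → i ≤ h → 1 ≤ j → j ≤ h →
      hasseE X L i j → dualE k L i j) :
    (∀ i, InTrack (dualE k L) h i ↔ InTrack (hasseE X L) h i) ∧
    (∀ i, promoPerm (dualE k L) h i = promoPerm (hasseE X L) h i) := by
  classical
  have hLmem : ∀ i, 1 ≤ i → i ≤ h → L i ∈ X := fun i h1 h2 =>
    (hmem (L i)).2 ⟨i, h1, h2, rfl⟩
  have hcard : ∀ i, 1 ≤ i → i ≤ h → (L i).card = k := fun i h1 h2 =>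
    (hX _ (hLmem i h1 h2)).2
  have hGale : ∀ v j, 1 ≤ v → v ≤ h → v < j → j ≤ h → dualE k L v j →
      GaleLT (L v) (L j) := by
    intro v j h1 h2 h3 h4 hd
    have hne := hinj v j h1 h3 h4
    rcases gale_comparable k (L v) (L j) (hcard v h1 h2)
        (hcard j (by omega) h4) hne hd.2 with hg | hg
    · exact hg
    · exact absurd (hlin j v (by omega) h4 h1 h2 hg) (by omega)
  have hminH : ∀ v j, 1 ≤ v → v ≤ h → v < j → j ≤ h → GaleLT (L v) (L j) →
      ∃ m0, v < m0 ∧ m0 ≤ j ∧ hasseE X L v m0 := by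
    intro v j h1 h2 h3 h4 hg
    set S : Set ℕ := {p | v < p ∧ p ≤ h ∧ GaleLT (L v) (L p)} with hS
    have hjS : j ∈ S := ⟨h3, h4, hg⟩
    have hm0 : sInf S ∈ S := Nat.sInf_mem ⟨j, hjS⟩
    refine ⟨sInf S, hm0.1, Nat.sInf_le hjS, Or.inl ⟨hm0.2.2, ?_⟩⟩
    rintro z hz ⟨h5, h6⟩
    obtain ⟨p, hp1, hp2, rfl⟩ := (hmem z).1 hz
    have hvp : v < p := hlin v p h1 h2 hp1 hp2 h5
    have hle : sInf S ≤ p := Nat.sInf_le ⟨hvp, hp2, h5⟩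
    have hv0 : v < sInf S := hm0.1
    have hpm : p < sInf S := hlin p (sInf S) hp1 hp2 (by omega) hm0.2.1 h6
    omega
  have key : ∀ v j, 1 ≤ v → v ≤ h → v < j → j ≤ h →
      ((dualE k L v j ∧ ∀ m, v < m → m < j → ¬ dualE k L v m) ↔
       (hasseE X L v j ∧ ∀ m, v < m → m < j → ¬ hasseE X L v m)) := by
    intro v j h1 h2 h3 h4
    constructor
    · rintro ⟨hd, hmin⟩
      have hg := hGale v j h1 h2 h3 h4 hd
      constructor
      · left
        refine ⟨hg, ?_⟩
        rintro z hz ⟨h5, h6⟩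
        obtain ⟨p, hp1, hp2, rfl⟩ := (hmem z).1 hz
        have hvp := hlin v p h1 h2 hp1 hp2 h5
        have hpj := hlin p j hp1 hp2 (by omega) h4 h6
        obtain ⟨m0, hm1, hm2, hm3⟩ := hminH v p h1 h2 hvp hp2 h5
        exact hmin m0 hm1 (by omega)
          (hsub v m0 h1 h2 (by omega) (by omega) hm3)
      · intro m hm1 hm2 hH
        exact hmin m hm1 hm2 (hsub v m h1 h2 (by omega) (by omega) hH)
    · rintro ⟨hH, hmin⟩
      refine ⟨hsub v j h1 h2 (by omega) h4 hH, ?_⟩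
      intro m hm1 hm2 hd
      have hg := hGale v m h1 h2 hm1 (by omega) hd
      obtain ⟨m0, hq1, hq2, hq3⟩ := hminH v m h1 h2 hm1 (by omega) hg
      exact hmin m0 hq1 (by omega) hq3
  have hbound : ∀ (E : ℕ → ℕ → Prop) i, InTrack E h i → 1 ≤ i ∧ i ≤ h := by
    intro E i ht
    induction ht with
    | base hh => exact ⟨le_refl 1, hh⟩
    | step v j _ hvj hjh _ _ ih => exact ⟨by omega, hjh⟩
  have hiff : ∀ i, InTrack (dualE k L) h i ↔ InTrack (hasseE X L) h i := by
    intro i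
    constructor
    · intro ht
      induction ht with
      | base hh => exact InTrack.base hh
      | step v j hv hvj hjh hE hmin ih =>
        obtain ⟨hb1, hb2⟩ := hbound _ v hv
        have hk := (key v j hb1 hb2 hvj hjh).1 ⟨hE, hmin⟩
        exact InTrack.step v j ih hvj hjh hk.1 hk.2
    · intro ht
      induction ht with
      | base hh => exact InTrack.base hh
      | step v j hv hvj hjh hE hmin ih =>
        obtain ⟨hb1, hb2⟩ := hbound _ v hv
        have hk := (key v j hb1 hb2 hvj hjh).2 ⟨hE, hmin⟩
        exact InTrack.step v j ih hvj hjh hk.1 hk.2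
  have hEq : InTrack (dualE k L) h = InTrack (hasseE X L) h :=
    funext fun i => propext (hiff i)
  refine ⟨hiff, fun i => ?_⟩
  unfold promoPerm
  rw [hEq]
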